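/- Let γ > 1 and λ ∈ ℝ, and let V₃ := −λℓ/(ℓ+1), C₃ := |λ|/(ℓ+1). Denoting by F_V, F_C, G_V, G_C the first-order partial derivatives of F and G evaluated at the point (V₃, C₃), the Wronskian satisfies F_C·G_V − F_V·G_C = ℓ·C₃²·(λ−1)·((γ−3)λ + (γ+1)). In particular, if λ < 1, λ ≠ 0, and 1 < γ < 3, then F_C·G_V − F_V·G_C < 0, so (V₃,C₃) is a saddle point of the reduced similarity ODE. -/

import Mathlib

noncomputable def ell (γ : ℝ) : ℝ := 2 / (γ - 1)
noncomputable def Vstar (γ lam : ℝ) : ℝ := ell γ * (1 - lam)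
noncomputable def k1 (γ lam : ℝ) : ℝ := (1 / ell γ - 1) * (lam - 1)
noncomputable def k0 (γ lam : ℝ) : ℝ := (lam - 1) / ell γ
noncomputable def Dfun (V C : ℝ) : ℝ := (1 + V) ^ 2 - C ^ 2
noncomputable def Gfun (γ lam V C : ℝ) : ℝ :=
  C ^ 2 * (V - Vstar γ lam) - V * (1 + V) * (lam + V)
noncomputable def Ffun (γ lam V C : ℝ) : ℝ :=
  C * (C ^ 2 - (1 + V) ^ 2 + k1 γ lam * (1 + V) - k0 γ lam)

lemma deriv_cubic (a b c d x : ℝ) :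
    deriv (fun t : ℝ => a * t ^ 3 + b * t ^ 2 + c * t + d) x
      = 3 * a * x ^ 2 + 2 * b * x + c := by
  have h : HasDerivAt (fun t : ℝ => a * t ^ 3 + b * t ^ 2 + c * t + d)
      (3 * a * x ^ 2 + 2 * b * x + c) x := by
    have h3 := (hasDerivAt_pow 3 x).const_mul a
    have h2 := (hasDerivAt_pow 2 x).const_mul b
    have h1 := ((hasDerivAt_id x).const_mul c)
    have := ((h3.add h2).add h1).add_const d
    exact this.congr_deriv (by push_cast; ring)
  exact h.deriv

set_option maxHeartbeats 2000000 in
/-- the Wronskian of the linearization at `P₃` equals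
`ℓ C₃² (λ−1)((γ−3)λ+(γ+1))`; in particular it is negative when
`λ < 1`, `λ ≠ 0` and `1 < γ < 3`, so `P₃` is a saddle point. -/
theorem stmt_8 (γ lam : ℝ) (hγ : 1 < γ) :
    let V3 : ℝ := -lam * ell γ / (ell γ + 1)
    let C3 : ℝ := |lam| / (ell γ + 1)
    let FV : ℝ := deriv (fun V => Ffun γ lam V C3) V3
    let FC : ℝ := deriv (fun C => Ffun γ lam V3 C) C3
    let GV : ℝ := deriv (fun V => Gfun γ lam V C3) V3
    let GC : ℝ := deriv (fun C => Gfun γ lam V3 C) C3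
    FC * GV - FV * GC = ell γ * C3 ^ 2 * (lam - 1) * ((γ - 3) * lam + (γ + 1)) ∧
    (lam < 1 → lam ≠ 0 → γ < 3 → FC * GV - FV * GC < 0) := by
  intro V3 C3 FV FC GV GC
  have hγ1 : γ - 1 ≠ 0 := ne_of_gt (by linarith)
  have hγ1p : (0:ℝ) < γ - 1 := by linarith
  have hℓ1 : ell γ + 1 = (γ + 1) / (γ - 1) := by unfold ell; field_simp; ring
  have hℓ1p : (0:ℝ) < ell γ + 1 := by rw [hℓ1]; positivity
  have hV3 : V3 = -lam * ell γ / (ell γ + 1) := rfl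
  have hC3 : C3 = |lam| / (ell γ + 1) := rfl
  have hc : C3 ^ 2 = lam ^ 2 / (ell γ + 1) ^ 2 := by
    rw [hC3, div_pow, sq_abs]
  have hFV : FV = C3 * (k1 γ lam - 2 * (1 + V3)) := by
    show deriv (fun V => Ffun γ lam V C3) V3 = _
    have heq : (fun V => Ffun γ lam V C3)
        = fun V => 0 * V ^ 3 + (-C3) * V ^ 2 + (C3 * (k1 γ lam - 2)) * V
            + C3 * (C3 ^ 2 - 1 + k1 γ lam - k0 γ lam) := by
      funext V; simp only [Ffun]; ring
    rw [heq, deriv_cubic]; ring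
  have hFC : FC = 3 * C3 ^ 2 + (-(1 + V3) ^ 2 + k1 γ lam * (1 + V3) - k0 γ lam) := by
    show deriv (fun C => Ffun γ lam V3 C) C3 = _
    have heq : (fun C => Ffun γ lam V3 C)
        = fun C => 1 * C ^ 3 + 0 * C ^ 2
            + (-(1 + V3) ^ 2 + k1 γ lam * (1 + V3) - k0 γ lam) * C + 0 := by
      funext C; simp only [Ffun]; ring
    rw [heq, deriv_cubic]; ring
  have hGV : GV = -3 * V3 ^ 2 - 2 * (1 + lam) * V3 + C3 ^ 2 - lam := by
    show deriv (fun V => Gfun γ lam V C3) V3 = _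
    have heq : (fun V => Gfun γ lam V C3)
        = fun V => (-1) * V ^ 3 + (-(1 + lam)) * V ^ 2 + (C3 ^ 2 - lam) * V
            + (-(C3 ^ 2) * Vstar γ lam) := by
      funext V; simp only [Gfun]; ring
    rw [heq, deriv_cubic]; ring
  have hGC : GC = 2 * C3 * (V3 - Vstar γ lam) := by
    show deriv (fun C => Gfun γ lam V3 C) C3 = _
    have heq : (fun C => Gfun γ lam V3 C)
        = fun C => 0 * C ^ 3 + (V3 - Vstar γ lam) * C ^ 2 + 0 * C
            + (-(V3 * (1 + V3) * (lam + V3))) := by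
      funext C; simp only [Gfun]; ring
    rw [heq, deriv_cubic]; ring
  have hE : FC * GV - FV * GC
      = (3 * C3 ^ 2 + (-(1 + V3) ^ 2 + k1 γ lam * (1 + V3) - k0 γ lam))
          * (-3 * V3 ^ 2 - 2 * (1 + lam) * V3 + C3 ^ 2 - lam)
        - 2 * (C3 ^ 2) * (k1 γ lam - 2 * (1 + V3)) * (V3 - Vstar γ lam) := by
    rw [hFV, hFC, hGV, hGC]; ring
  have hmain : FC * GV - FV * GC
      = ell γ * C3 ^ 2 * (lam - 1) * ((γ - 3) * lam + (γ + 1)) := by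
    rw [hE, hc, hV3, hℓ1]
    unfold k1 k0 Vstar ell
    have hγp1 : γ + 1 ≠ 0 := ne_of_gt (by linarith)
    field_simp
    ring
  refine ⟨hmain, fun h1 h2 h3 => ?_⟩
  rw [hmain]
  have hcp : 0 < C3 ^ 2 := by
    rw [hc]; positivity
  have hlp : 0 < ell γ := by unfold ell; positivity
  have hA : 0 < ell γ * C3 ^ 2 := mul_pos hlp hcp
  have hC : 0 < (γ - 3) * lam + (γ + 1) := by nlinarith
  nlinarith [mul_pos hA hC]
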